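/- arXiv:2505.13717 — 3 statements merged into one kernel-verified Lean document; each statement's English description precedes it below -/
import Mathlib

section
/- Let L ≥ 2 be even. The set of domain-wall counts realized by configurations b : Fin L → Bool is exactly the set of even numbers {2n : 0 ≤ n ≤ L/2}. Consequently, for J^z ≠ 0, the Hamiltonian H_0 = −J^z ∑_i Z_i Z_{i+1} has exactly L/2 + 1 distinct eigenvalues, namely {−J^z (L − 4n) : 0 ≤ n ≤ L/2}, which are equally spaced with gap ΔE = 4|J^z|. -/
open Matrix

/-- The single-site Pauli-Z matrix at site `i` of an `L`-qubit register, in the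
computational basis indexed by `Fin L → Bool`. -/
noncomputable def PauliZ (L : ℕ) (i : Fin L) :
    Matrix (Fin L → Bool) (Fin L → Bool) ℂ :=
  Matrix.of fun b c => if b = c then (if b i then -1 else 1) else 0

/-- The Ising Hamiltonian `H₀ = -Jᶻ ∑ᵢ Zᵢ Zᵢ₊₁` with periodic boundary conditions. -/
noncomputable def isingH (L : ℕ) [NeZero L] (Jz : ℝ) :
    Matrix (Fin L → Bool) (Fin L → Bool) ℂ :=
  -((Jz : ℂ) • ∑ i : Fin L, PauliZ L i * PauliZ L (i + 1))

lemma diag_entry (L : ℕ) [NeZero L] (Jz : ℝ) (b : Fin L → Bool) :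
    isingH L Jz b b = -(Jz : ℂ) * ((L : ℂ)
      - 2 * ((Finset.univ.filter (fun i : Fin L => b i ≠ b (i + 1))).card : ℂ)) := by
  have hmul : ∀ i : Fin L, (PauliZ L i * PauliZ L (i + 1)) b b
      = 1 - 2 * (if b i ≠ b (i + 1) then (1 : ℂ) else 0) := by
    intro i
    rw [Matrix.mul_apply, Finset.sum_eq_single b]
    · simp only [PauliZ, Matrix.of_apply, if_pos rfl]
      cases h1 : b i <;> cases h2 : b (i+1) <;> simp [h1, h2] <;> norm_num
    · intro c _ hc
      simp [PauliZ, (Ne.symm hc)]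
    · simp
  simp only [isingH, Matrix.neg_apply, Matrix.smul_apply, Matrix.sum_apply]
  rw [Finset.sum_congr rfl (fun i _ => hmul i)]
  rw [Finset.sum_sub_distrib, Finset.sum_const, ← Finset.mul_sum, Finset.sum_boole,
    Finset.card_univ, Fintype.card_fin]
  rw [smul_eq_mul]
  ring

lemma even_walls (L : ℕ) [NeZero L] (b : Fin L → Bool) :
    Even (Finset.univ.filter (fun i : Fin L => b i ≠ b (i + 1))).card := by
  set f : Fin L → ℤ := fun i => if b i then 1 else -1 with hf
  have key : ∏ i : Fin L, (if b i ≠ b (i + 1) then (-1 : ℤ) else 1) = (∏ i, f i) ^ 2 := by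
    have h1 : ∀ i : Fin L, (if b i ≠ b (i + 1) then (-1 : ℤ) else 1) = f i * f (i + 1) := by
      intro i
      cases h1 : b i <;> cases h2 : b (i+1) <;> simp [hf, h1, h2]
    rw [Finset.prod_congr rfl (fun i _ => h1 i), Finset.prod_mul_distrib]
    have h2 : ∏ i : Fin L, f (i + 1) = ∏ i : Fin L, f i :=
      Fintype.prod_equiv (Equiv.addRight (1 : Fin L)) _ _ (fun i => rfl)
    rw [h2]; ring
  have hsq : (∏ i, f i) ^ 2 = 1 := by
    rw [← Finset.prod_pow]
    apply Finset.prod_eq_one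
    intro i _
    cases h : b i <;> simp [hf, h]
  rw [hsq, Finset.prod_ite, Finset.prod_const, Finset.prod_const, one_pow, mul_one] at key
  rwa [neg_one_pow_eq_one_iff_even (by norm_num : (-1 : ℤ) ≠ 1)] at key

lemma card_filter_fin (L : ℕ) (q : ℕ → Prop) [DecidablePred q] :
    (Finset.univ.filter (fun i : Fin L => q i.val)).card
      = ((Finset.range L).filter q).card := by
  rw [← Finset.card_map Fin.valEmbedding, Finset.map_filter',
    Fin.map_valEmbedding_univ]
  congr 1
  ext k
  simp only [Finset.mem_filter, Finset.mem_Iio, Finset.mem_range, Fin.valEmbedding_apply]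
  constructor
  · rintro ⟨hk, a, ha, rfl⟩; exact ⟨a.isLt, ha⟩
  · rintro ⟨hk, hq⟩; exact ⟨hk, ⟨k, hk⟩, hq, rfl⟩

lemma realize_walls (L n : ℕ) [NeZero L] (hL : 2 ≤ L) (hLe : L % 2 = 0) (h2n : 2 * n ≤ L) :
    ∃ b : Fin L → Bool,
      (Finset.univ.filter (fun i : Fin L => b i ≠ b (i + 1))).card = 2 * n := by
  refine ⟨fun i => decide (i.val % 2 = 0 ∧ i.val < 2 * n), ?_⟩
  have hval : ∀ i : Fin L, ((i + 1 : Fin L) : ℕ) = (i.val + 1) % L := by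
    intro i
    rw [Fin.add_def, Fin.val_one', Nat.mod_eq_of_lt (show 1 < L by omega)]
  have hcond : ∀ i : Fin L,
      (¬((i.val % 2 = 0 ∧ i.val < 2 * n) ↔
        (((i.val + 1) % L) % 2 = 0 ∧ ((i.val + 1) % L) < 2 * n))) ↔
      (i.val + 1 < 2 * n ∨ (n ≠ 0 ∧ i.val = L - 1)) := by
    intro i
    have hk := i.isLt
    rcases Nat.lt_or_ge (i.val + 1) L with h | h
    · rw [Nat.mod_eq_of_lt h]; omega
    · have h0 : i.val + 1 = L := by omega
      rw [h0, Nat.mod_self]; omega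
  have key : Finset.univ.filter
        (fun i : Fin L => (fun i : Fin L => decide (i.val % 2 = 0 ∧ i.val < 2 * n)) i
          ≠ (fun i : Fin L => decide (i.val % 2 = 0 ∧ i.val < 2 * n)) (i + 1))
      = Finset.univ.filter
        (fun i : Fin L => i.val + 1 < 2 * n ∨ (n ≠ 0 ∧ i.val = L - 1)) := by
    apply Finset.filter_congr
    intro i _
    simp only [ne_eq, decide_eq_decide, hval i]
    rw [hcond i]
  rw [key, card_filter_fin L (fun k => k + 1 < 2 * n ∨ (n ≠ 0 ∧ k = L - 1))]
  rcases Nat.eq_zero_or_pos n with rfl | hn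
  · rw [Finset.filter_false_of_mem, Finset.card_empty]
    intro k _
    omega
  · have hset : (Finset.range L).filter (fun k => k + 1 < 2 * n ∨ (n ≠ 0 ∧ k = L - 1))
        = insert (L - 1) (Finset.range (2 * n - 1)) := by
      ext k
      simp only [Finset.mem_filter, Finset.mem_range, Finset.mem_insert]
      omega
    rw [hset, Finset.card_insert_of_notMem (by simp [Finset.mem_range]; omega),
      Finset.card_range]
    omega

/-- Let `L ≥ 2` be even. The set of domain-wall counts realized by configurations
`b : Fin L → Bool` is exactly `{2n : 0 ≤ n ≤ L/2}`. Consequently, for `Jᶻ ≠ 0`, the diagonal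
Hamiltonian `H₀ = -Jᶻ ∑ᵢ Zᵢ Zᵢ₊₁` has as eigenvalues (= diagonal entries) exactly the set
`{-Jᶻ (L - 4n) : 0 ≤ n ≤ L/2}`, which has exactly `L/2 + 1` elements, equally spaced with
gap `ΔE = 4 |Jᶻ|`. -/
theorem isingH_spectrum (L : ℕ) [NeZero L] (hL : 2 ≤ L) (hLeven : Even L)
    (Jz : ℝ) (hJ : Jz ≠ 0) :
    (Set.range (fun b : Fin L → Bool =>
        (Finset.univ.filter (fun i : Fin L => b i ≠ b (i + 1))).card)
      = {m : ℕ | ∃ n ≤ L / 2, m = 2 * n})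
    ∧ ({x : ℂ | ∃ b : Fin L → Bool, isingH L Jz b b = x}
        = {x : ℂ | ∃ n ≤ L / 2, x = -(Jz : ℂ) * ((L : ℂ) - 4 * (n : ℂ))})
    ∧ ({x : ℂ | ∃ b : Fin L → Bool, isingH L Jz b b = x}.ncard = L / 2 + 1)
    ∧ (∀ n : ℕ, n < L / 2 →
        ‖((-(Jz : ℂ) * ((L : ℂ) - 4 * ((n + 1 : ℕ) : ℂ)))
          - (-(Jz : ℂ) * ((L : ℂ) - 4 * (n : ℂ))))‖ = 4 * |Jz|) := by
  have hLe : L % 2 = 0 := Nat.even_iff.mp hLeven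
  have part1 : Set.range (fun b : Fin L → Bool =>
        (Finset.univ.filter (fun i : Fin L => b i ≠ b (i + 1))).card)
      = {m : ℕ | ∃ n ≤ L / 2, m = 2 * n} := by
    ext m
    simp only [Set.mem_range, Set.mem_setOf_eq]
    constructor
    · rintro ⟨b, rfl⟩
      obtain ⟨k, hk⟩ := even_walls L b
      have hle : (Finset.univ.filter (fun i : Fin L => b i ≠ b (i + 1))).card ≤ L := by
        simpa using Finset.card_filter_le Finset.univ (fun i : Fin L => b i ≠ b (i + 1))
      exact ⟨k, by omega, by omega⟩
    · rintro ⟨n, hn, rfl⟩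
      obtain ⟨b, hb⟩ := realize_walls L n hL hLe (by omega)
      exact ⟨b, hb⟩
  refine ⟨part1, ?_, ?_, ?_⟩
  · ext x
    simp only [Set.mem_setOf_eq]
    constructor
    · rintro ⟨b, rfl⟩
      have hmem : (Finset.univ.filter (fun i : Fin L => b i ≠ b (i + 1))).card
          ∈ {m : ℕ | ∃ n ≤ L / 2, m = 2 * n} := by
        rw [← part1]; exact ⟨b, rfl⟩
      obtain ⟨n, hn, hcard⟩ := hmem
      refine ⟨n, hn, ?_⟩
      rw [diag_entry, hcard]
      push_cast
      ring
    · rintro ⟨n, hn, rfl⟩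
      obtain ⟨b, hb⟩ := realize_walls L n hL hLe (by omega)
      refine ⟨b, ?_⟩
      rw [diag_entry, hb]
      push_cast
      ring
  · have h2 : {x : ℂ | ∃ b : Fin L → Bool, isingH L Jz b b = x}
        = (fun n : ℕ => -(Jz : ℂ) * ((L : ℂ) - 4 * (n : ℂ))) '' (Set.Iic (L / 2)) := by
      ext x
      simp only [Set.mem_setOf_eq, Set.mem_image, Set.mem_Iic]
      constructor
      · rintro ⟨b, rfl⟩
        have hmem : (Finset.univ.filter (fun i : Fin L => b i ≠ b (i + 1))).card
            ∈ {m : ℕ | ∃ n ≤ L / 2, m = 2 * n} := by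
          rw [← part1]; exact ⟨b, rfl⟩
        obtain ⟨n, hn, hcard⟩ := hmem
        refine ⟨n, hn, ?_⟩
        rw [diag_entry, hcard]
        push_cast
        ring
      · rintro ⟨n, hn, rfl⟩
        obtain ⟨b, hb⟩ := realize_walls L n hL hLe (by omega)
        refine ⟨b, ?_⟩
        rw [diag_entry, hb]
        push_cast
        ring
    rw [h2]
    have hinj : Set.InjOn (fun n : ℕ => -(Jz : ℂ) * ((L : ℂ) - 4 * (n : ℂ)))
        (Set.Iic (L / 2)) := by
      intro a _ c _ h
      have hJ' : (Jz : ℂ) ≠ 0 := Complex.ofReal_ne_zero.mpr hJ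
      have h2' := mul_left_cancel₀ (neg_ne_zero.mpr hJ') h
      have h3 : (a : ℂ) = (c : ℂ) := by linear_combination (-(1 : ℂ)/4) * h2'
      exact_mod_cast h3
    rw [Set.ncard_image_of_injOn hinj, ← Finset.coe_Iic, Set.ncard_coe_finset, Nat.card_Iic]
  · intro n hn
    rw [show (-(Jz : ℂ) * ((L : ℂ) - 4 * ((n + 1 : ℕ) : ℂ)))
          - (-(Jz : ℂ) * ((L : ℂ) - 4 * (n : ℂ))) = ((4 * Jz : ℝ) : ℂ) by push_cast; ring,
      Complex.norm_real, Real.norm_eq_abs, abs_mul]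
    norm_num
end

section
/- Let E be a complex inner product space and let 𝒳 : E → E be a self-adjoint linear isometric involution (𝒳 is ℂ-linear, ⟪𝒳u, v⟫ = ⟪u, 𝒳v⟫ for all u, v, and 𝒳 ∘ 𝒳 = id). Let ψ₀ and ψ₁ be unit vectors with ⟪ψ₀, ψ₁⟫ = 0, ⟪ψ₀, 𝒳ψ₀⟫ = 0 and ⟪ψ₁, 𝒳ψ₁⟫ = 0. Suppose θ ∈ [0, π/2], φ ∈ ℝ, ε ∈ {1, −1}, and the vector ψ = (cos θ) • ψ₀ + (sin θ · e^{iφ}) • ψ₁ satisfies 𝒳 ψ = ε • ψ. Then θ = π/4 and e^{iφ} • ψ₁ = ε • 𝒳 ψ₀; consequently ψ = (1/√2) • (ψ₀ + ε • 𝒳 ψ₀). -/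
open scoped ComplexInnerProductSpace

/-- Let `𝒳` be a self-adjoint linear isometric involution of a complex inner product space,
let `ψ₀, ψ₁` be orthonormal vectors with `⟪ψ₀, 𝒳ψ₀⟫ = ⟪ψ₁, 𝒳ψ₁⟫ = 0`, and suppose the state
`ψ = cos θ • ψ₀ + (sin θ · e^{iφ}) • ψ₁` (with `θ ∈ [0, π/2]`, `φ ∈ ℝ`) satisfies
`𝒳 ψ = ε • ψ` with `ε = ±1`.  Then `θ = π/4` and `e^{iφ} • ψ₁ = ε • 𝒳 ψ₀`; consequently
`ψ = (1/√2) • (ψ₀ + ε • 𝒳 ψ₀)`. -/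
theorem parity_eigenstate_structure
    {E : Type*} [NormedAddCommGroup E] [InnerProductSpace ℂ E]
    (X : E →ₗ[ℂ] E)
    (hsa : ∀ u v : E, ⟪X u, v⟫ = ⟪u, X v⟫)
    (hinv : ∀ u : E, X (X u) = u)
    (ψ₀ ψ₁ : E) (hψ₀ : ‖ψ₀‖ = 1) (hψ₁ : ‖ψ₁‖ = 1)
    (horth : ⟪ψ₀, ψ₁⟫ = 0)
    (h00 : ⟪ψ₀, X ψ₀⟫ = 0) (h11 : ⟪ψ₁, X ψ₁⟫ = 0)
    (θ φ : ℝ) (hθ : θ ∈ Set.Icc 0 (Real.pi / 2))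
    (ε : ℂ) (hε : ε = 1 ∨ ε = -1)
    (ψ : E)
    (hψ : ψ = (Real.cos θ : ℂ) • ψ₀
      + ((Real.sin θ : ℂ) * Complex.exp (Complex.I * (φ : ℂ))) • ψ₁)
    (hfix : X ψ = ε • ψ) :
    θ = Real.pi / 4
    ∧ Complex.exp (Complex.I * (φ : ℂ)) • ψ₁ = ε • X ψ₀
    ∧ ψ = (((Real.sqrt 2)⁻¹ : ℝ) : ℂ) • (ψ₀ + ε • X ψ₀) := by
  set z : ℂ := Complex.exp (Complex.I * (φ : ℂ)) with hzdef
  set c : ℂ := (Real.cos θ : ℂ) with hcdef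
  set s : ℂ := (Real.sin θ : ℂ) with hsdef
  have hεconj : (starRingEnd ℂ) ε = ε := by rcases hε with h | h <;> simp [h]
  have hε2 : ε * ε = 1 := by rcases hε with h | h <;> simp [h]
  have hε0 : ε ≠ 0 := by rcases hε with h | h <;> simp [h]
  have hzconj : (starRingEnd ℂ) z = Complex.exp (-(Complex.I * (φ : ℂ))) := by
    rw [hzdef, ← Complex.exp_conj]
    congr 1
    simp
  have hz : z * (starRingEnd ℂ) z = 1 := by
    rw [hzconj, hzdef, ← Complex.exp_add, add_neg_cancel, Complex.exp_zero]
  have h10 : ⟪ψ₁, ψ₀⟫ = 0 := by rw [← inner_conj_symm, horth, map_zero]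
  have h11n : ⟪ψ₁, ψ₁⟫ = 1 := by
    rw [inner_self_eq_norm_sq_to_K, hψ₁]; norm_num
  have h00n : ⟪ψ₀, ψ₀⟫ = 1 := by
    rw [inner_self_eq_norm_sq_to_K, hψ₀]; norm_num
  set a : ℂ := ⟪ψ₁, X ψ₀⟫ with hadef
  have h01X : ⟪ψ₀, X ψ₁⟫ = (starRingEnd ℂ) a := by
    rw [← hsa, ← inner_conj_symm, hadef]
  -- Expand the eigenvector equation
  have hX : c • X ψ₀ + (s * z) • X ψ₁ = (ε * c) • ψ₀ + (ε * (s * z)) • ψ₁ := by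
    have h := hfix
    rw [hψ, map_add, map_smul, map_smul, smul_add, smul_smul, smul_smul] at h
    exact h
  have eq1 : c * a = ε * (s * z) := by
    have := congrArg (fun w => ⟪ψ₁, w⟫) hX
    simpa [inner_add_right, inner_smul_right, h11, h10, h11n, hψ₁, hadef, mul_comm,
      mul_left_comm] using this
  have eq2 : (s * z) * (starRingEnd ℂ) a = ε * c := by
    have := congrArg (fun w => ⟪ψ₀, w⟫) hX
    simpa [inner_add_right, inner_smul_right, h00, horth, h00n, hψ₀, h01X, mul_comm,
      mul_left_comm] using this
  have hcconj : (starRingEnd ℂ) c = c := by rw [hcdef]; exact Complex.conj_ofReal _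
  have hsconj : (starRingEnd ℂ) s = s := by rw [hsdef]; exact Complex.conj_ofReal _
  have eq1' : c * (starRingEnd ℂ) a = ε * (s * (starRingEnd ℂ) z) := by
    have h := congrArg (starRingEnd ℂ) eq1
    rw [map_mul, map_mul, map_mul, hεconj, hcconj, hsconj] at h
    exact h
  have key : s ^ 2 = c ^ 2 := by
    refine mul_left_cancel₀ hε0 ?_
    calc ε * s ^ 2 = (s * z) * (ε * (s * (starRingEnd ℂ) z)) := by
            rw [show (s * z) * (ε * (s * (starRingEnd ℂ) z))
              = ε * (s ^ 2 * (z * (starRingEnd ℂ) z)) by ring, hz]; ring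
        _ = (s * z) * (c * (starRingEnd ℂ) a) := by rw [eq1']
        _ = c * ((s * z) * (starRingEnd ℂ) a) := by ring
        _ = c * (ε * c) := by rw [eq2]
        _ = ε * c ^ 2 := by ring
  have keyR : Real.sin θ ^ 2 = Real.cos θ ^ 2 := by
    rw [hsdef, hcdef] at key; exact_mod_cast key
  have hsqrt2 : Real.sqrt 2 > 0 := Real.sqrt_pos.mpr (by norm_num)
  have hsqrt2sq : Real.sqrt 2 * Real.sqrt 2 = 2 := Real.mul_self_sqrt (by norm_num)
  have hcosθ : Real.cos θ = (Real.sqrt 2)⁻¹ := by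
    have h1 : Real.sin θ ^ 2 = 1 - Real.cos θ ^ 2 := by
      have := Real.sin_sq_add_cos_sq θ; linarith
    have h2 : Real.cos θ ^ 2 = 1 / 2 := by linarith [keyR]
    have hcnn : 0 ≤ Real.cos θ := Real.cos_nonneg_of_mem_Icc
      ⟨by linarith [hθ.1, Real.pi_pos], hθ.2⟩
    have hinv2 : (Real.sqrt 2)⁻¹ * (Real.sqrt 2)⁻¹ = 1 / 2 := by
      field_simp
      rw [Real.sq_sqrt (by norm_num)]
    nlinarith [hcnn, hsqrt2, inv_pos.mpr hsqrt2, hinv2, h2]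
  have hθeq : θ = Real.pi / 4 := by
    have hpi : (0:ℝ) < Real.pi := Real.pi_pos
    refine Real.injOn_cos ⟨hθ.1, by linarith [hθ.2]⟩
      ⟨by linarith, by linarith⟩ ?_
    rw [hcosθ, Real.cos_pi_div_four]
    rw [eq_div_iff (by norm_num : (2:ℝ) ≠ 0), inv_mul_eq_div,
      div_eq_iff (ne_of_gt hsqrt2)]
    linarith [hsqrt2sq]
  have hsinθ : Real.sin θ = (Real.sqrt 2)⁻¹ := by
    rw [hθeq, Real.sin_pi_div_four]
    rw [eq_comm, inv_eq_iff_eq_inv, eq_comm, inv_div,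
      div_eq_iff (ne_of_gt hsqrt2)]
    linarith [hsqrt2sq]
  have hcs : c = s := by rw [hcdef, hsdef, hcosθ, hsinθ]
  have hc0 : c ≠ 0 := by
    rw [hcdef, hcosθ]
    exact_mod_cast inv_ne_zero (ne_of_gt hsqrt2)
  have ha : a = ε * z := by
    have : c * a = c * (ε * z) := by rw [eq1, hcs]; ring
    exact mul_left_cancel₀ hc0 this
  -- norm of X ψ₀
  have hXψ₀ : ‖X ψ₀‖ = 1 := by
    have h : ⟪X ψ₀, X ψ₀⟫ = ⟪ψ₀, ψ₀⟫ := by rw [hsa, hinv]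
    rw [inner_self_eq_norm_sq_to_K, inner_self_eq_norm_sq_to_K, hψ₀] at h
    have h' : ‖X ψ₀‖ ^ 2 = 1 ^ 2 := by exact_mod_cast h
    nlinarith [norm_nonneg (X ψ₀)]
  have hzabs : ‖z‖ = 1 := by
    rw [hzdef, Complex.norm_exp]
    simp
  have hv : ‖(ε * (starRingEnd ℂ) z) • X ψ₀‖ = 1 := by
    rw [norm_smul, hXψ₀, mul_one]
    have : ‖ε * (starRingEnd ℂ) z‖ = 1 := by
      rw [norm_mul, Complex.norm_conj, hzabs]
      rcases hε with h | h <;> simp [h]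
    simpa using this
  have hinner1 : ⟪ψ₁, (ε * (starRingEnd ℂ) z) • X ψ₀⟫ = 1 := by
    rw [inner_smul_right, ← hadef, ha]
    rw [show ε * (starRingEnd ℂ) z * (ε * z) = (ε * ε) * (z * (starRingEnd ℂ) z) by ring,
      hε2, hz, one_mul]
  have hψ₁eq : ψ₁ = (ε * (starRingEnd ℂ) z) • X ψ₀ :=
    (inner_eq_one_iff_of_norm_eq_one hψ₁ hv).mp hinner1
  have hmain : z • ψ₁ = ε • X ψ₀ := by
    rw [hψ₁eq, smul_smul,
      show z * (ε * (starRingEnd ℂ) z) = ε * (z * (starRingEnd ℂ) z) by ring, hz, mul_one]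
  refine ⟨hθeq, hmain, ?_⟩
  rw [hψ, hcs, mul_smul, hmain, ← smul_add, hsdef, hsinθ]
end

section
/- Let L ≥ 1 and c : Fin L → ZMod 2. For 0 ≤ j ≤ L−2 let U_j be the CNOT update with control site j+1 and target site j, i.e. U_j(b) = Function.update b j (b j + b (j+1)) (here j+1 is the ordinary successor, not cyclic). Then applying the updates to c in the order U_{L−2}, U_{L−3}, …, U_1, U_0 produces the configuration j ↦ ∑_{k : j ≤ k ≤ L−1} c k; that is, the cascade of L−1 CNOT gates implements the map Φ₀⁻¹ sending each bit to the XOR of itself with all the bits to its right. -/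
theorem cnot_aux (L : ℕ) (hL : 1 ≤ L) (c : Fin L → ZMod 2) :
    ∀ k m : ℕ, k + m = L - 1 →
    ((List.finRange (L - 1)).drop m).foldr
        (fun (j : Fin (L - 1)) (b : Fin L → ZMod 2) =>
          Function.update b ⟨j.1, Nat.lt_of_lt_of_le j.isLt (Nat.sub_le L 1)⟩
            (b ⟨j.1, Nat.lt_of_lt_of_le j.isLt (Nat.sub_le L 1)⟩ + b ⟨j.1 + 1, Nat.add_lt_of_lt_sub j.isLt⟩))
        c
      = fun j : Fin L => if m ≤ j.1 then
          ∑ k ∈ Finset.univ.filter (fun k : Fin L => j ≤ k), c k else c j := by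
  intro k
  induction k with
  | zero =>
      intro m hm
      have hmL : m = L - 1 := by omega
      subst hmL
      rw [List.drop_eq_nil_of_le (by simp)]
      funext j
      simp only [List.foldr_nil]
      split_ifs with h
      · have hj : (j : ℕ) = L - 1 := by have := j.isLt; omega
        have hfilter : Finset.univ.filter (fun k : Fin L => j ≤ k) = {j} := by
          ext x
          simp only [Finset.mem_filter, Finset.mem_univ, true_and, Finset.mem_singleton,
            Fin.le_def, Fin.ext_iff]
          have := x.isLt; omega
        rw [hfilter, Finset.sum_singleton]
      · rfl
  | succ n ih =>
      intro m hm
      have hmlt : m < L - 1 := by omega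
      have hdrop : (List.finRange (L - 1)).drop m
          = (⟨m, hmlt⟩ : Fin (L - 1)) :: (List.finRange (L - 1)).drop (m + 1) := by
        rw [List.drop_eq_getElem_cons (by simpa using hmlt)]
        congr 1
        simp
      rw [hdrop, List.foldr_cons, ih (m + 1) (by omega)]
      funext j
      have hm1 : ¬ (m + 1 ≤ m) := by omega
      by_cases hj : (j : ℕ) = m
      · have hje : j = ⟨m, by omega⟩ := Fin.ext hj
        rw [Function.update_apply, if_pos hje, if_pos (by omega), hje]
        simp only [if_neg hm1, if_pos (le_refl (m + 1))]
        have hins : Finset.univ.filter (fun k : Fin L => (⟨m, by omega⟩ : Fin L) ≤ k)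
            = insert (⟨m, by omega⟩ : Fin L)
              (Finset.univ.filter (fun k : Fin L => (⟨m + 1, by omega⟩ : Fin L) ≤ k)) := by
          ext x
          simp only [Finset.mem_filter, Finset.mem_univ, true_and, Finset.mem_insert,
            Fin.le_def, Fin.ext_iff]
          omega
        rw [hins, Finset.sum_insert (by simp [Fin.le_def])]
      · rw [Function.update_apply, if_neg (fun h => hj (by rw [h]))]
        split_ifs with h1 h2 h2
        · rfl
        · omega
        · omega
        · rfl

/-- A cascade of `L-1` CNOT gates implements the map `Φ₀⁻¹`.  For `0 ≤ j ≤ L-2` let `U_j` be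
the CNOT update with control site `j+1` and target site `j` (here `j+1` is the ordinary
successor, not cyclic), `U_j(b) = Function.update b j (b j + b (j+1))`.  Applying the updates
to `c` in the order `U_{L-2}, U_{L-3}, …, U_1, U_0` produces the suffix-sum configuration
`j ↦ ∑_{k : j ≤ k} c k`, i.e. each bit becomes the XOR of itself with all bits to its
right. -/
theorem cnot_cascade_eq_suffix_sums (L : ℕ) (hL : 1 ≤ L) (c : Fin L → ZMod 2) :
    (List.finRange (L - 1)).foldr
        (fun (j : Fin (L - 1)) (b : Fin L → ZMod 2) =>
          Function.update b ⟨j.1, by omega⟩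
            (b ⟨j.1, by have := j.isLt; omega⟩ + b ⟨j.1 + 1, by have := j.isLt; omega⟩))
        c
      = fun j : Fin L => ∑ k ∈ Finset.univ.filter (fun k : Fin L => j ≤ k), c k := by
  have := cnot_aux L hL c (L - 1) 0 (by omega)
  simpa using this
end
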